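/- Let A be a symmetric positive definite n×n real matrix with smallest eigenvalue λ_min(A). Define the fundamental quantity c(A) = min over z with ‖z‖_∞ = 1 of max over 1 ≤ i ≤ n of z_i (Az)_i. Then λ_min(A)/n ≤ c(A) ≤ λ_min(A). -/

import Mathlib

open Matrix

lemma quad_lb {m : ℕ} (A : Matrix (Fin m) (Fin m) ℝ) (hA : A.IsHermitian)
    (lam : ℝ) (hlam : ∀ i, lam ≤ hA.eigenvalues i) (x : Fin m → ℝ) :
    lam * (x ⬝ᵥ x) ≤ x ⬝ᵥ (A *ᵥ x) := by
  set U : Matrix (Fin m) (Fin m) ℝ := (hA.eigenvectorUnitary : Matrix (Fin m) (Fin m) ℝ) with hUdef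
  have hU : U * star U = 1 := (Matrix.mem_unitaryGroup_iff).mp hA.eigenvectorUnitary.2
  have hB : (A - lam • 1).PosSemidef := by
    have h1 : A - lam • (1 : Matrix (Fin m) (Fin m) ℝ) =
        U * (diagonal (fun i => hA.eigenvalues i - lam)) * star U := by
      have hs := hA.spectral_theorem
      rw [Unitary.conjStarAlgAut_apply] at hs
      have hd : diagonal (fun i => hA.eigenvalues i - lam)
          = diagonal (RCLike.ofReal ∘ hA.eigenvalues) - lam • (1 : Matrix (Fin m) (Fin m) ℝ) := by
        ext i j
        by_cases h : i = j <;>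
          simp [h, diagonal_apply, Matrix.one_apply, Matrix.smul_apply, RCLike.ofReal]
      rw [hd, Matrix.mul_sub, Matrix.sub_mul, hUdef, ← hs, Matrix.mul_smul, Matrix.mul_one,
        Matrix.smul_mul, ← hUdef, hU]
    have hps : (diagonal (fun i => hA.eigenvalues i - lam)).PosSemidef :=
      Matrix.posSemidef_diagonal_iff.mpr fun i => by simpa using hlam i
    have := hps.mul_mul_conjTranspose_same U
    rwa [← Matrix.star_eq_conjTranspose, ← h1] at this
  have h2 := hB.dotProduct_mulVec_nonneg x
  have h3 : star x ⬝ᵥ ((A - lam • 1) *ᵥ x) = x ⬝ᵥ (A *ᵥ x) - lam * (x ⬝ᵥ x) := by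
    simp [Matrix.sub_mulVec, Matrix.smul_mulVec, dotProduct_sub, dotProduct_smul,
      Matrix.one_mulVec, star_trivial, smul_eq_mul]
  rw [h3] at h2
  linarith

lemma key_lb {n : ℕ} (A : Matrix (Fin (n+1)) (Fin (n+1)) ℝ) (hA : A.IsHermitian)
    (lam : ℝ) (hlam0 : 0 ≤ lam) (hlam : ∀ i, lam ≤ hA.eigenvalues i)
    (z : Fin (n+1) → ℝ) (hz : ‖z‖ = 1) :
    lam / (n+1) ≤ Finset.univ.sup' Finset.univ_nonempty (fun i => z i * A.mulVec z i) := by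
  have hzz : (1:ℝ) ≤ z ⬝ᵥ z := by
    obtain ⟨j, -, hj⟩ := Finset.exists_mem_eq_sup (Finset.univ : Finset (Fin (n+1)))
      Finset.univ_nonempty (fun i => ‖z i‖₊)
    have hnj : ‖z j‖ = 1 := by
      have : ‖z‖ = ((Finset.univ.sup fun i => ‖z i‖₊ : NNReal) : ℝ) := by
        rw [Pi.norm_def]
      rw [hz, hj] at this
      rw [← coe_nnnorm]
      exact_mod_cast this.symm
    have : (1:ℝ) ≤ z j * z j := by
      have h1 : |z j| = 1 := hnj
      nlinarith [abs_mul_abs_self (z j)]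
    calc (1:ℝ) ≤ z j * z j := this
      _ ≤ ∑ i, z i * z i := Finset.single_le_sum (fun i _ => mul_self_nonneg (z i))
          (Finset.mem_univ j)
      _ = z ⬝ᵥ z := rfl
  have hq : lam ≤ z ⬝ᵥ (A *ᵥ z) := by
    calc lam = lam * 1 := (mul_one lam).symm
      _ ≤ lam * (z ⬝ᵥ z) := by nlinarith
      _ ≤ z ⬝ᵥ (A *ᵥ z) := quad_lb A hA lam hlam z
  set M := Finset.univ.sup' Finset.univ_nonempty (fun i => z i * A.mulVec z i) with hM
  have hsum : z ⬝ᵥ (A *ᵥ z) ≤ (n+1 : ℝ) * M := by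
    have : ∀ i ∈ (Finset.univ : Finset (Fin (n+1))), z i * A.mulVec z i ≤ M :=
      fun i hi => Finset.le_sup' (fun i => z i * A.mulVec z i) hi
    calc z ⬝ᵥ (A *ᵥ z) = ∑ i, z i * A.mulVec z i := rfl
      _ ≤ (Finset.univ : Finset (Fin (n+1))).card • M := Finset.sum_le_card_nsmul _ _ _ this
      _ = (n+1 : ℝ) * M := by simp [nsmul_eq_mul]
  rw [div_le_iff₀ (by positivity)]
  nlinarith

/-- for `A` symmetric positive definite, the fundamental
quantity `c(A) = min_{‖z‖_∞ = 1} max_i z_i (Az)_i` satisfies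
`λ_min(A)/n ≤ c(A) ≤ λ_min(A)`.  (The norm on `Fin (n+1) → ℝ` is the sup
norm, and the dimension is `n+1 ≥ 1`.) -/
theorem stmt7 {n : ℕ} (A : Matrix (Fin (n+1)) (Fin (n+1)) ℝ) (hA : A.PosDef)
    (hAsymm : A.IsSymm) :
    let lamMin : ℝ := ⨅ i, hA.1.eigenvalues i
    let c : ℝ := sInf {t : ℝ | ∃ z : Fin (n+1) → ℝ, ‖z‖ = 1 ∧
      t = Finset.univ.sup' Finset.univ_nonempty (fun i => z i * A.mulVec z i)}
    lamMin / (n+1) ≤ c ∧ c ≤ lamMin := by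
  intro lamMin c
  have hlam : ∀ i, lamMin ≤ hA.1.eigenvalues i := fun i =>
    ciInf_le (Set.Finite.bddBelow (Set.finite_range _)) i
  obtain ⟨i₀, hi₀⟩ := Finset.exists_min_image Finset.univ hA.1.eigenvalues
    Finset.univ_nonempty
  obtain ⟨-, hi₀⟩ := hi₀
  have hmin : lamMin = hA.1.eigenvalues i₀ :=
    le_antisymm (hlam i₀) (le_ciInf fun i => hi₀ i (Finset.mem_univ i))
  have hpos : 0 < lamMin := hmin ▸ hA.eigenvalues_pos i₀
  -- eigenvector
  set w : Fin (n+1) → ℝ := ⇑(hA.1.eigenvectorBasis i₀) with hwdef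
  have hmul : A *ᵥ w = hA.1.eigenvalues i₀ • w := hA.1.mulVec_eigenvectorBasis i₀
  have hw0 : w ≠ 0 := by
    have h := hA.1.eigenvectorBasis.orthonormal.ne_zero i₀
    intro hc; exact h (by ext j; exact congrFun hc j)
  have hwn : ‖w‖ ≠ 0 := norm_ne_zero_iff.mpr hw0
  set z := ‖w‖⁻¹ • w with hzdef
  have hz1 : ‖z‖ = 1 := by
    rw [hzdef, norm_smul, norm_inv, norm_norm, inv_mul_cancel₀ hwn]
  have hAz : A *ᵥ z = hA.1.eigenvalues i₀ • z := by
    rw [hzdef, mulVec_smul, hmul, smul_comm]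
  have hzle : ∀ i, z i * A.mulVec z i ≤ lamMin := by
    intro i
    have h1 : |z i| ≤ 1 := by
      have := norm_le_pi_norm z i
      rwa [hz1] at this
    have h2 : A.mulVec z i = hA.1.eigenvalues i₀ * z i := by rw [hAz]; rfl
    rw [h2, hmin]
    have hsq : z i * z i ≤ 1 := by nlinarith [abs_mul_abs_self (z i), abs_nonneg (z i)]
    nlinarith [hA.eigenvalues_pos i₀, hsq]
  have hmem : (Finset.univ.sup' Finset.univ_nonempty (fun i => z i * A.mulVec z i)) ∈
      {t : ℝ | ∃ z : Fin (n+1) → ℝ, ‖z‖ = 1 ∧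
        t = Finset.univ.sup' Finset.univ_nonempty (fun i => z i * A.mulVec z i)} :=
    ⟨z, hz1, rfl⟩
  have hkey : ∀ t ∈ {t : ℝ | ∃ z : Fin (n+1) → ℝ, ‖z‖ = 1 ∧
      t = Finset.univ.sup' Finset.univ_nonempty (fun i => z i * A.mulVec z i)},
      lamMin / (n+1) ≤ t := by
    rintro t ⟨y, hy1, rfl⟩
    exact key_lb A hA.1 lamMin hpos.le hlam y hy1
  have hbdd : BddBelow {t : ℝ | ∃ z : Fin (n+1) → ℝ, ‖z‖ = 1 ∧
      t = Finset.univ.sup' Finset.univ_nonempty (fun i => z i * A.mulVec z i)} :=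
    ⟨lamMin / (n+1), hkey⟩
  constructor
  · exact le_csInf ⟨_, hmem⟩ hkey
  · exact (csInf_le hbdd hmem).trans (Finset.sup'_le _ _ fun i _ => hzle i)
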